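/- For all positive integers r > s and k ≥ 3, the set-coloring Ramsey number of the complete graph satisfies R_{r,s}(K_k) > ⌊ (k/e) · r^{−1/k} · (r/s)^{(k−1)/2} ⌋. -/

import Mathlib

open SimpleGraph Finset

/-- `K_N` (with vertices `Fin N`) colored by `χ` contains a copy of `H` all of
whose edges' color sets contain the color element `i`. -/
def MonoCopy {W : Type} (H : SimpleGraph W) {N r : ℕ}
    (χ : Sym2 (Fin N) → Finset (Fin r)) (i : Fin r) : Prop :=
  ∃ f : W → Fin N, Function.Injective f ∧ ∀ u v, H.Adj u v → i ∈ χ s(f u, f v)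

/-- Every `(r,s)`-coloring of the edges of `K_N` (each edge gets an `s`-element
subset of `Fin r`) yields, for some `i`, a copy of `G i` monochromatic with
color element `i`. -/
def SetRamseyProp {r : ℕ} (s : ℕ) {V : Fin r → Type} (G : ∀ i, SimpleGraph (V i))
    (N : ℕ) : Prop :=
  ∀ χ : Sym2 (Fin N) → Finset (Fin r),
    (∀ e : Sym2 (Fin N), ¬ e.IsDiag → (χ e).card = s) →
    ∃ i, MonoCopy (G i) χ i

/-- The set-coloring Ramsey number `R_{r,s}(G₁,…,G_r)`. -/
noncomputable def setRamsey {r : ℕ} (s : ℕ) {V : Fin r → Type}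
    (G : ∀ i, SimpleGraph (V i)) : ℕ :=
  sInf {N | SetRamseyProp s G N}

lemma ramsey_chain {M r : ℕ} (hr : 0 < r) (c : Sym2 (Fin M) → Fin r) :
    ∀ (t : ℕ) (V : Finset (Fin M)), (r + 1) ^ t ≤ V.card →
      ∃ (g : Fin t → Fin M) (col : Fin t → Fin r),
        (∀ i, g i ∈ V) ∧ Function.Injective g ∧
          ∀ i j : Fin t, i < j → c s(g i, g j) = col i := by
  intro t
  induction t with
  | zero =>
    intro V _
    exact ⟨Fin.elim0, Fin.elim0, fun i => i.elim0, fun i => i.elim0, fun i => i.elim0⟩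
  | succ t ih =>
    intro V hV
    have hVne : V.Nonempty := by
      rw [← Finset.card_pos]
      calc 0 < (r + 1) ^ (t + 1) := pow_pos (Nat.succ_pos r) _
        _ ≤ V.card := hV
    obtain ⟨v, hv⟩ := hVne
    set W : Fin r → Finset (Fin M) :=
      fun i => (V.erase v).filter (fun u => c s(v, u) = i) with hW
    have hex : ∃ i, (r + 1) ^ t ≤ (W i).card := by
      by_contra hcon
      push_neg at hcon
      have hsum : (V.erase v).card = ∑ i : Fin r, (W i).card := by
        apply Finset.card_eq_sum_card_fiberwise (f := fun u => c s(v, u))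
        intro x _; exact Finset.mem_univ _
      have hle : (∑ i : Fin r, (W i).card) + r ≤ r * (r + 1) ^ t := by
        calc (∑ i : Fin r, (W i).card) + r = ∑ i : Fin r, ((W i).card + 1) := by
              rw [Finset.sum_add_distrib, Finset.sum_const, Finset.card_univ,
                Fintype.card_fin, smul_eq_mul, mul_one]
          _ ≤ ∑ _i : Fin r, (r + 1) ^ t := Finset.sum_le_sum fun i _ => hcon i
          _ = r * (r + 1) ^ t := by
              rw [Finset.sum_const, Finset.card_univ, Fintype.card_fin, smul_eq_mul]
      have hcard : (V.erase v).card = V.card - 1 := Finset.card_erase_of_mem hv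
      have hP : 1 ≤ (r + 1) ^ t := Nat.one_le_pow _ _ (Nat.succ_pos r)
      have hvc : 1 ≤ V.card := Finset.card_pos.mpr ⟨v, hv⟩
      have hV' : (r + 1) ^ t * r + (r + 1) ^ t ≤ V.card := by
        calc (r + 1) ^ t * r + (r + 1) ^ t = (r + 1) ^ (t + 1) := by ring
          _ ≤ V.card := hV
      have h3 : (r + 1) ^ t * r = r * (r + 1) ^ t := Nat.mul_comm _ _
      omega
    obtain ⟨i, hi⟩ := hex
    obtain ⟨g', col', hmem', hinj', hcol'⟩ := ih (W i) hi
    have hWsub : ∀ j, g' j ∈ V.erase v ∧ c s(v, g' j) = i := by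
      intro j
      have := hmem' j
      rw [hW, Finset.mem_filter] at this
      exact this
    refine ⟨Fin.cases v g', Fin.cases i col', ?_, ?_, ?_⟩
    · intro j
      refine Fin.cases ?_ ?_ j
      · simpa using hv
      · intro j'
        simp only [Fin.cases_succ]
        exact Finset.mem_of_mem_erase (hWsub j').1
    · intro a b hab
      rcases Fin.eq_zero_or_eq_succ a with rfl | ⟨a', rfl⟩ <;>
        rcases Fin.eq_zero_or_eq_succ b with rfl | ⟨b', rfl⟩
      · rfl
      · simp only [Fin.cases_zero, Fin.cases_succ] at hab
        exact absurd hab.symm (Finset.ne_of_mem_erase (hWsub b').1)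
      · simp only [Fin.cases_zero, Fin.cases_succ] at hab
        exact absurd hab (Finset.ne_of_mem_erase (hWsub a').1)
      · simp only [Fin.cases_succ] at hab
        rw [hinj' hab]
    · intro a b hab
      rcases Fin.eq_zero_or_eq_succ a with rfl | ⟨a', rfl⟩ <;>
        rcases Fin.eq_zero_or_eq_succ b with rfl | ⟨b', rfl⟩
      · exact absurd hab (lt_irrefl _)
      · simp only [Fin.cases_zero, Fin.cases_succ]
        exact (hWsub b').2
      · exact absurd hab (Fin.not_lt_zero _)
      · simp only [Fin.cases_succ]
        exact hcol' a' b' (Fin.succ_lt_succ_iff.mp hab)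

lemma setRamseyProp_mono {r s : ℕ} {V : Fin r → Type} {G : ∀ i, SimpleGraph (V i)}
    {M N : ℕ} (h : SetRamseyProp s G M) (hMN : M ≤ N) : SetRamseyProp s G N := by
  intro χ hχ
  set emb : Fin M → Fin N := Fin.castLE hMN with hemb
  have hembinj : Function.Injective emb := Fin.castLE_injective hMN
  have hχ' : ∀ e : Sym2 (Fin M), ¬ e.IsDiag → ((χ (e.map emb)).card = s) := by
    intro e he
    apply hχ
    induction e with
    | _ a b =>
      simp only [Sym2.map_pair_eq, Sym2.mk_isDiag_iff] at he ⊢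
      exact fun hc => he (hembinj hc)
  obtain ⟨i, f, hfinj, hf⟩ := h (fun e => χ (e.map emb)) hχ'
  refine ⟨i, emb ∘ f, hembinj.comp hfinj, ?_⟩
  intro u v huv
  have := hf u v huv
  simpa only [Sym2.map_pair_eq, Function.comp_apply] using this

lemma ramsey_exists (r s k : ℕ) (hr : 0 < r) (hs : 0 < s) :
    SetRamseyProp s (fun _ : Fin r => (⊤ : SimpleGraph (Fin k)))
      ((r + 1) ^ (r * (k - 1) + 1)) := by
  classical
  set M := (r + 1) ^ (r * (k - 1) + 1) with hM
  intro χ hχ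
  set c : Sym2 (Fin M) → Fin r :=
    fun e => if h : (χ e).Nonempty then (χ e).min' h else ⟨0, hr⟩ with hc
  set t := r * (k - 1) + 1 with ht
  obtain ⟨g, col, hmem, hinj, hcol⟩ :=
    ramsey_chain hr c t (univ : Finset (Fin M))
      (by rw [Finset.card_univ, Fintype.card_fin])
  obtain ⟨i0, -, hi0⟩ :=
    Finset.exists_lt_card_fiber_of_mul_lt_card_of_maps_to
      (s := (univ : Finset (Fin t))) (t := (univ : Finset (Fin r))) (f := col) (n := k - 1)
      (fun a _ => Finset.mem_univ _)
      (by rw [Finset.card_univ, Finset.card_univ, Fintype.card_fin, Fintype.card_fin]; omega)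
  obtain ⟨F, hFsub, hFcard⟩ :=
    Finset.exists_subset_card_eq (s := univ.filter fun j => col j = i0) (n := k) (by omega)
  have hFcol : ∀ j ∈ F, col j = i0 := by
    intro j hj
    exact (Finset.mem_filter.mp (hFsub hj)).2
  set σ := F.orderIsoOfFin hFcard with hσ
  set f : Fin k → Fin M := fun a => g (σ a) with hf
  have hfinj : Function.Injective f := by
    intro a b hab
    have : (σ a : Fin t) = (σ b : Fin t) := hinj hab
    exact σ.injective (Subtype.ext this)
  refine ⟨i0, f, hfinj, ?_⟩
  have key : ∀ u v : Fin k, u < v → i0 ∈ χ s(f u, f v) := by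
    intro u v huv
    have hlt : (σ u : Fin t) < (σ v : Fin t) := by
      exact_mod_cast σ.lt_iff_lt.mpr huv
    have hcc : c s(f u, f v) = i0 := by
      rw [hcol (σ u) (σ v) hlt]
      exact hFcol _ (σ u).2
    have hne : f u ≠ f v := fun hcon => absurd (hfinj hcon) huv.ne
    have hnd : ¬ (s(f u, f v) : Sym2 (Fin M)).IsDiag := by
      simpa [Sym2.mk_isDiag_iff] using hne
    have hne' : (χ s(f u, f v)).Nonempty := by
      rw [← Finset.card_pos, hχ _ hnd]; exact hs
    have : c s(f u, f v) ∈ χ s(f u, f v) := by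
      rw [hc]; simp only [hne', dif_pos]; exact Finset.min'_mem _ _
    rwa [hcc] at this
  intro u v huv
  have hne : u ≠ v := by simpa using huv
  rcases lt_or_gt_of_ne hne with h | h
  · exact key u v h
  · rw [Sym2.eq_swap]; exact key v u h

lemma qcard (r s : ℕ) (hs : 0 < s) (i : Fin r) :
    ((univ : Finset {A : Finset (Fin r) // A.card = s}).filter fun A => i ∈ A.1).card
      = (r - 1).choose (s - 1) := by
  classical
  have htarget : (Finset.powersetCard (s - 1) ((univ : Finset (Fin r)).erase i)).card
      = (r - 1).choose (s - 1) := by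
    rw [Finset.card_powersetCard, Finset.card_erase_of_mem (Finset.mem_univ i),
      Finset.card_univ, Fintype.card_fin]
  rw [← htarget]
  have hins : ∀ B ∈ Finset.powersetCard (s - 1) ((univ : Finset (Fin r)).erase i),
      (insert i B).card = s := by
    intro B hB
    rw [Finset.mem_powersetCard] at hB
    have hiB : i ∉ B := fun h => (Finset.notMem_erase i univ) (hB.1 h)
    rw [Finset.card_insert_of_notMem hiB, hB.2]
    omega
  refine Finset.card_bij' (fun A _ => A.1.erase i) (fun B hB => ⟨insert i B, hins B hB⟩)
    ?_ ?_ ?_ ?_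
  · intro A hA
    rw [Finset.mem_filter] at hA
    rw [Finset.mem_powersetCard]
    exact ⟨Finset.erase_subset_erase i (Finset.subset_univ _),
      by rw [Finset.card_erase_of_mem hA.2, A.2]⟩
  · intro B hB
    rw [Finset.mem_filter]
    exact ⟨Finset.mem_univ _, Finset.mem_insert_self _ _⟩
  · intro A hA
    rw [Finset.mem_filter] at hA
    exact Subtype.ext (Finset.insert_erase hA.2)
  · intro B hB
    rw [Finset.mem_powersetCard] at hB
    have hiB : i ∉ B := fun h => (Finset.notMem_erase i univ) (hB.1 h)
    exact Finset.erase_insert hiB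

lemma no_mono (r s k N : ℕ) (hs : 0 < s) (hrs : s < r) (hk : 3 ≤ k)
    (hkey : r * N.choose k * s ^ (k * (k - 1) / 2) < r ^ (k * (k - 1) / 2)) :
    ¬ SetRamseyProp s (fun _ : Fin r => (⊤ : SimpleGraph (Fin k))) N := by
  classical
  intro hprop
  by_cases hNk : N < k
  · obtain ⟨A, -, hA⟩ := Finset.exists_subset_card_eq
      (s := (univ : Finset (Fin r))) (n := s)
      (by rw [Finset.card_univ, Fintype.card_fin]; omega)
    obtain ⟨i, f, hfinj, -⟩ := hprop (fun _ => A) (fun _ _ => hA)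
    have := Fintype.card_le_of_injective f hfinj
    rw [Fintype.card_fin, Fintype.card_fin] at this
    omega
  push_neg at hNk
  set m0 := k * (k - 1) / 2 with hm0
  set c0 := r.choose s with hc0
  set c1 := (r - 1).choose (s - 1) with hc1
  have hc0pos : 0 < c0 := Nat.choose_pos (le_of_lt hrs)
  set β := {A : Finset (Fin r) // A.card = s} with hβ
  have hcβ : Fintype.card β = c0 := by
    show Fintype.card {A : Finset (Fin r) // A.card = s} = r.choose s
    rw [Fintype.card_finset_len, Fintype.card_fin]
  set E := Fintype.card (Sym2 (Fin N)) with hE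
  have hΩ : Fintype.card (Sym2 (Fin N) → β) = c0 ^ E := by
    rw [Fintype.card_fun, hcβ]
  -- edge sets of k-subsets
  set ET : Finset (Fin N) → Finset (Sym2 (Fin N)) :=
    fun T => T.offDiag.image fun p => s(p.1, p.2) with hET
  have hETbounds : ∀ T : Finset (Fin N), T.card = k →
      m0 ≤ (ET T).card ∧ (ET T).card ≤ E := by
    intro T hT
    constructor
    · have hoff : T.offDiag.card ≤ 2 * (ET T).card := by
        apply Finset.card_le_mul_card_image
        intro e he
        simp only [Finset.mem_image] at he
        obtain ⟨⟨a, b⟩, -, rfl⟩ := he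
        have hsub : (T.offDiag.filter fun p => s(p.1, p.2) = s(a, b)) ⊆
            ({(a, b), (b, a)} : Finset (Fin N × Fin N)) := by
          intro p hp
          rw [Finset.mem_filter] at hp
          rcases Sym2.eq_iff.mp hp.2 with ⟨h1, h2⟩ | ⟨h1, h2⟩ <;>
            simp [Finset.mem_insert, Prod.ext_iff, h1, h2]
        calc (T.offDiag.filter fun p => s(p.1, p.2) = s(a, b)).card
            ≤ ({(a, b), (b, a)} : Finset (Fin N × Fin N)).card := Finset.card_le_card hsub
          _ ≤ 2 := by
              apply le_trans (Finset.card_insert_le _ _)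
              simp
      have hoffcard : T.offDiag.card = k * k - k := by
        rw [Finset.offDiag_card, hT]
      have hkk : k * (k - 1) = k * k - k := by
        cases k with
        | zero => simp
        | succ k' => simp only [Nat.succ_sub_one]; ring_nf; omega
      omega
    · exact Finset.card_le_univ _
  have hm0E : m0 ≤ E := by
    obtain ⟨T, -, hT⟩ := Finset.exists_subset_card_eq
      (s := (univ : Finset (Fin N))) (n := k)
      (by rw [Finset.card_univ, Fintype.card_fin]; omega)
    exact le_trans (hETbounds T hT).1 (hETbounds T hT).2
  -- bad sets
  set Q : Fin r → Finset β := fun i => univ.filter fun A => i ∈ A.1 with hQ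
  have hQcard : ∀ i, (Q i).card = c1 := fun i => qcard r s hs i
  have hQle : ∀ i, (Q i).card ≤ c0 := by
    intro i
    calc (Q i).card ≤ (univ : Finset β).card := Finset.card_le_univ _
      _ = c0 := by rw [Finset.card_univ, hcβ]
  set BadSet : Fin r → Finset (Fin N) → Finset (Sym2 (Fin N) → β) :=
    fun i T => univ.filter fun ω => ∀ e ∈ ET T, ω e ∈ Q i with hBadSet
  have hBadSetcard : ∀ (i : Fin r) (T : Finset (Fin N)), T.card = k →
      (BadSet i T).card ≤ c1 ^ m0 * c0 ^ (E - m0) := by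
    intro i T hT
    obtain ⟨hm0m, hmE⟩ := hETbounds T hT
    set m := (ET T).card with hm
    have hset : BadSet i T =
        Fintype.piFinset (fun e => if e ∈ ET T then Q i else univ) := by
      ext ω
      simp only [hBadSet, Finset.mem_filter, Finset.mem_univ, true_and,
        Fintype.mem_piFinset]
      constructor
      · intro h e
        by_cases he : e ∈ ET T
        · rw [if_pos he]; exact h e he
        · rw [if_neg he]; exact Finset.mem_univ _
      · intro h e he
        have := h e
        rwa [if_pos he] at this
    have hcard : (BadSet i T).card = (Q i).card ^ m * c0 ^ (E - m) := by
      rw [hset, Fintype.card_piFinset]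
      have : ∀ e : Sym2 (Fin N),
          (if e ∈ ET T then Q i else univ).card
            = if e ∈ ET T then (Q i).card else c0 := by
        intro e
        split_ifs
        · rfl
        · rw [Finset.card_univ, hcβ]
      rw [Finset.prod_congr rfl (fun e _ => this e)]
      rw [← Finset.prod_filter_mul_prod_filter_not univ (· ∈ ET T)]
      have h1 : ∀ e ∈ univ.filter (· ∈ ET T),
          (if e ∈ ET T then (Q i).card else c0) = (Q i).card := by
        intro e he
        rw [Finset.mem_filter] at he
        rw [if_pos he.2]
      have h2 : ∀ e ∈ univ.filter (¬ · ∈ ET T),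
          (if e ∈ ET T then (Q i).card else c0) = c0 := by
        intro e he
        rw [Finset.mem_filter] at he
        rw [if_neg he.2]
      rw [Finset.prod_congr rfl h1, Finset.prod_congr rfl h2,
        Finset.prod_const, Finset.prod_const]
      congr 1
      · rw [Finset.filter_univ_mem]
      · have : univ.filter (¬ · ∈ ET T) = (ET T)ᶜ := by
          ext e; simp
        rw [this, Finset.card_compl]
    rw [hcard]
    calc (Q i).card ^ m * c0 ^ (E - m)
        = (Q i).card ^ m0 * (Q i).card ^ (m - m0) * c0 ^ (E - m) := by
          rw [← pow_add, Nat.add_sub_cancel' hm0m]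
      _ ≤ (Q i).card ^ m0 * c0 ^ (m - m0) * c0 ^ (E - m) := by
          apply Nat.mul_le_mul_right
          apply Nat.mul_le_mul_left
          exact Nat.pow_le_pow_left (hQle i) _
      _ = (Q i).card ^ m0 * c0 ^ (E - m0) := by
          rw [mul_assoc, ← pow_add]
          congr 2
          omega
      _ = c1 ^ m0 * c0 ^ (E - m0) := by rw [hQcard i]
  -- bad colorings
  set Bad : Finset (Sym2 (Fin N) → β) :=
    univ.filter fun ω =>
      ∃ i, MonoCopy (⊤ : SimpleGraph (Fin k)) (fun e => (ω e).1) i with hBad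
  have hBadsub : Bad ⊆
      ((univ : Finset (Fin r)) ×ˢ Finset.powersetCard k (univ : Finset (Fin N))).biUnion
        (fun p => BadSet p.1 p.2) := by
    intro ω hω
    rw [hBad, Finset.mem_filter] at hω
    obtain ⟨-, i, f, hfinj, hmono⟩ := hω
    rw [Finset.mem_biUnion]
    refine ⟨(i, univ.image f), ?_, ?_⟩
    · rw [Finset.mem_product, Finset.mem_powersetCard]
      exact ⟨Finset.mem_univ _, Finset.subset_univ _,
        by rw [Finset.card_image_of_injective _ hfinj, Finset.card_univ, Fintype.card_fin]⟩
    · rw [hBadSet, Finset.mem_filter]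
      refine ⟨Finset.mem_univ _, ?_⟩
      intro e he
      simp only [hET, Finset.mem_image] at he
      obtain ⟨⟨u, v⟩, hp, rfl⟩ := he
      rw [Finset.mem_offDiag] at hp
      obtain ⟨hu, hv, huv⟩ := hp
      simp only [Finset.mem_image, Finset.mem_univ, true_and] at hu hv
      obtain ⟨a, rfl⟩ := hu
      obtain ⟨b, rfl⟩ := hv
      rw [hQ, Finset.mem_filter]
      refine ⟨Finset.mem_univ _, ?_⟩
      exact hmono a b (by simp only [top_adj]; exact fun hab => huv (congrArg f hab))
  have hBadcard : Bad.card ≤ r * N.choose k * (c1 ^ m0 * c0 ^ (E - m0)) := by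
    calc Bad.card
        ≤ (((univ : Finset (Fin r)) ×ˢ Finset.powersetCard k (univ : Finset (Fin N))).biUnion
            (fun p => BadSet p.1 p.2)).card := Finset.card_le_card hBadsub
      _ ≤ ∑ p ∈ (univ : Finset (Fin r)) ×ˢ Finset.powersetCard k (univ : Finset (Fin N)),
            (BadSet p.1 p.2).card := Finset.card_biUnion_le
      _ ≤ ∑ _p ∈ (univ : Finset (Fin r)) ×ˢ Finset.powersetCard k (univ : Finset (Fin N)),
            (c1 ^ m0 * c0 ^ (E - m0)) := by
          apply Finset.sum_le_sum
          intro p hp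
          rw [Finset.mem_product, Finset.mem_powersetCard] at hp
          exact hBadSetcard p.1 p.2 hp.2.2
      _ = r * N.choose k * (c1 ^ m0 * c0 ^ (E - m0)) := by
          rw [Finset.sum_const, smul_eq_mul, Finset.card_product, Finset.card_univ,
            Fintype.card_fin, Finset.card_powersetCard, Finset.card_univ, Fintype.card_fin]
  have hmul : r * c1 = s * c0 := by
    have h := Nat.add_one_mul_choose_eq (r - 1) (s - 1)
    have hr1 : r - 1 + 1 = r := by omega
    have hs1 : s - 1 + 1 = s := by omega
    rw [hr1, hs1] at h
    rw [hc1, hc0, h]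
    ring
  have hA : r * N.choose k * c1 ^ m0 < c0 ^ m0 := by
    have hstep : (r * N.choose k * c1 ^ m0) * r ^ m0 < c0 ^ m0 * r ^ m0 := by
      calc (r * N.choose k * c1 ^ m0) * r ^ m0
          = r * N.choose k * (r * c1) ^ m0 := by ring
        _ = r * N.choose k * (s * c0) ^ m0 := by rw [hmul]
        _ = (r * N.choose k * s ^ m0) * c0 ^ m0 := by ring
        _ < r ^ m0 * c0 ^ m0 :=
            Nat.mul_lt_mul_of_lt_of_le hkey (le_refl _) (pow_pos hc0pos _)
        _ = c0 ^ m0 * r ^ m0 := by ring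
    exact Nat.lt_of_mul_lt_mul_right hstep
  have hfinal : r * N.choose k * (c1 ^ m0 * c0 ^ (E - m0)) < c0 ^ E := by
    calc r * N.choose k * (c1 ^ m0 * c0 ^ (E - m0))
        = (r * N.choose k * c1 ^ m0) * c0 ^ (E - m0) := by ring
      _ < c0 ^ m0 * c0 ^ (E - m0) :=
          Nat.mul_lt_mul_of_lt_of_le hA (le_refl _) (pow_pos hc0pos _)
      _ = c0 ^ E := by rw [← pow_add, Nat.add_sub_cancel' hm0E]
  have hlt : Bad.card < (univ : Finset (Sym2 (Fin N) → β)).card := by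
    rw [Finset.card_univ, hΩ]
    exact lt_of_le_of_lt hBadcard hfinal
  have hex : ∃ ω : Sym2 (Fin N) → β, ω ∉ Bad := by
    by_contra hcon
    push_neg at hcon
    have : Bad = univ := Finset.eq_univ_iff_forall.mpr hcon
    rw [this] at hlt
    exact lt_irrefl _ hlt
  obtain ⟨ω, hω⟩ := hex
  obtain ⟨i, hmono⟩ := hprop (fun e => (ω e).1) (fun e _ => (ω e).2)
  exact hω (Finset.mem_filter.mpr ⟨Finset.mem_univ _, i, hmono⟩)

lemma key_ineq (r s k N : ℕ) (hs : 0 < s) (hrs : s < r) (hk : 3 ≤ k)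
    (hNx : (N : ℝ) ≤ ((k : ℝ) / Real.exp 1) * (r : ℝ) ^ (-(1 : ℝ) / (k : ℝ)) *
        ((r : ℝ) / (s : ℝ)) ^ (((k : ℝ) - 1) / 2)) :
    r * N.choose k * s ^ (k * (k - 1) / 2) < r ^ (k * (k - 1) / 2) := by
  have hrpos : 0 < r := lt_trans hs hrs
  set m0 := k * (k - 1) / 2 with hm0
  have heven : Even (k * (k - 1)) := by
    have := Nat.even_mul_succ_self (k - 1)
    have hk1 : k - 1 + 1 = k := by omega
    rw [hk1] at this
    rwa [mul_comm]
  have h2m0 : 2 * m0 = k * (k - 1) := by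
    obtain ⟨c, hc⟩ := heven
    omega
  by_cases hNk : N < k
  · rw [Nat.choose_eq_zero_of_lt hNk]
    simpa using pow_pos hrpos m0
  push_neg at hNk
  have hr0 : (0 : ℝ) < r := by exact_mod_cast hrpos
  have hs0 : (0 : ℝ) < s := by exact_mod_cast hs
  have hk0 : (0 : ℝ) < k := by exact_mod_cast (by omega : 0 < k)
  have hrs0 : (0 : ℝ) < (r : ℝ) / s := div_pos hr0 hs0
  -- strict factorial bound
  have hfactN : (k.factorial * N.choose k : ℕ) < N ^ k := by
    rw [← Nat.descFactorial_eq_factorial_mul_choose]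
    exact Nat.descFactorial_lt_pow (by omega) (by omega)
  have hfact : (N.choose k : ℝ) * (k.factorial : ℝ) < (N : ℝ) ^ k := by
    rw [mul_comm]
    exact_mod_cast hfactN
  have hfactpos : (0 : ℝ) < (k.factorial : ℝ) := by
    exact_mod_cast k.factorial_pos
  -- k^k ≤ e^k k!
  have hek : (k : ℝ) ^ k ≤ Real.exp 1 ^ k * (k.factorial : ℝ) := by
    have h1 : (k : ℝ) ^ k / (k.factorial : ℝ) ≤ Real.exp k :=
      Real.pow_div_factorial_le_exp (x := (k : ℝ)) (le_of_lt hk0) k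
    have h2 : Real.exp (k : ℝ) = Real.exp 1 ^ k := by
      rw [← Real.exp_nat_mul, mul_one]
    rw [div_le_iff₀ hfactpos] at h1
    rw [h2] at h1
    exact h1
  -- choose bound
  have hchoose : (N.choose k : ℝ) * (k : ℝ) ^ k < (N : ℝ) ^ k * Real.exp 1 ^ k := by
    calc (N.choose k : ℝ) * (k : ℝ) ^ k
        ≤ (N.choose k : ℝ) * (Real.exp 1 ^ k * (k.factorial : ℝ)) := by
          apply mul_le_mul_of_nonneg_left hek (by positivity)
      _ = ((N.choose k : ℝ) * (k.factorial : ℝ)) * Real.exp 1 ^ k := by ring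
      _ < (N : ℝ) ^ k * Real.exp 1 ^ k :=
          mul_lt_mul_of_pos_right hfact (pow_pos (Real.exp_pos 1) k)
  -- N e / k ≤ x e / k simplification
  have hxe : ((k : ℝ) / Real.exp 1) * (r : ℝ) ^ (-(1 : ℝ) / (k : ℝ)) *
        ((r : ℝ) / (s : ℝ)) ^ (((k : ℝ) - 1) / 2) * Real.exp 1 / k
      = (r : ℝ) ^ (-(1 : ℝ) / (k : ℝ)) * ((r : ℝ) / (s : ℝ)) ^ (((k : ℝ) - 1) / 2) := by
    field_simp
  have hNe : (N : ℝ) * Real.exp 1 / k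
      ≤ (r : ℝ) ^ (-(1 : ℝ) / (k : ℝ)) * ((r : ℝ) / (s : ℝ)) ^ (((k : ℝ) - 1) / 2) := by
    rw [← hxe]
    gcongr
  -- the power of the product
  have hrp : ((r : ℝ) ^ (-(1 : ℝ) / (k : ℝ))) ^ (k : ℕ) = (r : ℝ)⁻¹ := by
    rw [← Real.rpow_natCast ((r : ℝ) ^ (-(1 : ℝ) / (k : ℝ))) k,
      ← Real.rpow_mul (le_of_lt hr0)]
    have : -(1 : ℝ) / (k : ℝ) * (k : ℕ) = -1 := by
      field_simp
    rw [this, Real.rpow_neg_one]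
  have hq : (((r : ℝ) / (s : ℝ)) ^ (((k : ℝ) - 1) / 2)) ^ (k : ℕ)
      = ((r : ℝ) / (s : ℝ)) ^ (m0 : ℕ) := by
    rw [← Real.rpow_natCast (((r : ℝ) / (s : ℝ)) ^ (((k : ℝ) - 1) / 2)) k,
      ← Real.rpow_mul (le_of_lt hrs0), ← Real.rpow_natCast ((r : ℝ) / (s : ℝ)) m0]
    congr 1
    have hcast : ((k - 1 : ℕ) : ℝ) = (k : ℝ) - 1 := by
      rw [Nat.cast_sub (by omega)]
      norm_num
    have h2 : (2 : ℝ) * (m0 : ℕ) = (k : ℝ) * ((k : ℝ) - 1) := by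
      rw [← hcast]
      exact_mod_cast h2m0
    linarith [h2]
  -- assemble: choose < r⁻¹ (r/s)^m0
  have hNek : ((N : ℝ) * Real.exp 1 / k) ^ k
      ≤ (r : ℝ)⁻¹ * ((r : ℝ) / (s : ℝ)) ^ (m0 : ℕ) := by
    rw [← hrp, ← hq, ← mul_pow]
    exact pow_le_pow_left₀ (by positivity) hNe k
  have hchoose2 : (N.choose k : ℝ) < (r : ℝ)⁻¹ * ((r : ℝ) / (s : ℝ)) ^ (m0 : ℕ) := by
    have hne : ((N : ℝ) * Real.exp 1 / k) ^ k
        = (N : ℝ) ^ k * Real.exp 1 ^ k / (k : ℝ) ^ k := by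
      rw [div_pow, mul_pow]
    have h1 : (N.choose k : ℝ) < (N : ℝ) ^ k * Real.exp 1 ^ k / (k : ℝ) ^ k := by
      rw [lt_div_iff₀ (pow_pos hk0 k)]
      exact hchoose
    calc (N.choose k : ℝ) < (N : ℝ) ^ k * Real.exp 1 ^ k / (k : ℝ) ^ k := h1
      _ = ((N : ℝ) * Real.exp 1 / k) ^ k := hne.symm
      _ ≤ (r : ℝ)⁻¹ * ((r : ℝ) / (s : ℝ)) ^ (m0 : ℕ) := hNek
  -- final real inequality
  have hfinal : (r : ℝ) * (N.choose k : ℝ) * (s : ℝ) ^ (m0 : ℕ) < (r : ℝ) ^ (m0 : ℕ) := by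
    calc (r : ℝ) * (N.choose k : ℝ) * (s : ℝ) ^ (m0 : ℕ)
        < (r : ℝ) * ((r : ℝ)⁻¹ * ((r : ℝ) / (s : ℝ)) ^ (m0 : ℕ)) * (s : ℝ) ^ (m0 : ℕ) := by
          apply mul_lt_mul_of_pos_right ?_ (by positivity)
          exact mul_lt_mul_of_pos_left hchoose2 hr0
      _ = ((r : ℝ) / (s : ℝ) * (s : ℝ)) ^ (m0 : ℕ) := by
          rw [mul_pow]
          field_simp
      _ = (r : ℝ) ^ (m0 : ℕ) := by
          rw [div_mul_cancel₀ _ (ne_of_gt hs0)]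
  exact_mod_cast hfinal

/-- For `r > s ≥ 1` and `k ≥ 3`,
`R_{r,s}(K_k) > ⌊(k/e)·r^{−1/k}·(r/s)^{(k−1)/2}⌋`. -/
theorem setRamsey_clique_lower (r s k : ℕ) (hs : 0 < s) (hrs : s < r)
    (hk : 3 ≤ k) :
    ⌊((k : ℝ) / Real.exp 1) * (r : ℝ) ^ (-(1 : ℝ) / (k : ℝ)) *
        ((r : ℝ) / (s : ℝ)) ^ (((k : ℝ) - 1) / 2)⌋
      < (setRamsey s (fun _ : Fin r => (⊤ : SimpleGraph (Fin k))) : ℤ) := by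
  set G : ∀ _ : Fin r, SimpleGraph (Fin k) := fun _ => ⊤ with hG
  set x := ((k : ℝ) / Real.exp 1) * (r : ℝ) ^ (-(1 : ℝ) / (k : ℝ)) *
      ((r : ℝ) / (s : ℝ)) ^ (((k : ℝ) - 1) / 2) with hx
  rcases lt_or_ge ⌊x⌋ 0 with h0 | h0
  · exact lt_of_lt_of_le h0 (Int.natCast_nonneg _)
  · set N := ⌊x⌋.toNat with hN
    have hNZ : (N : ℤ) = ⌊x⌋ := Int.toNat_of_nonneg h0
    have hNx : (N : ℝ) ≤ x := by
      have h1 : ((N : ℤ) : ℝ) ≤ x := by rw [hNZ]; exact Int.floor_le x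
      exact_mod_cast h1
    have hbad := no_mono r s k N hs hrs hk (key_ineq r s k N hs hrs hk hNx)
    have hne : Set.Nonempty {M | SetRamseyProp s G M} :=
      ⟨(r + 1) ^ (r * (k - 1) + 1), ramsey_exists r s k (lt_trans hs hrs) hs⟩
    have hmem : SetRamseyProp s G (setRamsey s G) := Nat.sInf_mem hne
    have hlt : N < setRamsey s G := by
      by_contra hcon
      push_neg at hcon
      exact hbad (setRamseyProp_mono hmem hcon)
    rw [← hNZ]
    exact_mod_cast hlt
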